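/- Let F be a field and let c₁, c₂ ∈ F⁴ be linearly independent (the rows of a rank-2 cache matrix C, with C_A its left 2×2 block of first-two coordinates and C_B its right 2×2 block of last-two coordinates). If there exists t ∈ F⁴ such that the cache recovers file A from t (i.e., e₀, e₁ ∈ span{c₁, c₂, t}) and there exists t' ∈ F⁴ such that the cache recovers file B from t' (i.e., e₂, e₃ ∈ span{c₁, c₂, t'}), then rank(C_A) = 1 and rank(C_B) = 1. -/

import Mathlib

/-- Coordinates of `F⁴` correspond to the subfiles `A₀, A₁, B₀, B₁`.  A user with
cache rows `c1, c2` recovers file `A` from transmission `t` iff `e₀` and `e₁`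
lie in the span of `{c1, c2, t}`. -/
def recoversA {F : Type*} [Field F] (c1 c2 t : Fin 4 → F) : Prop :=
  (Pi.single 0 1 : Fin 4 → F) ∈ Submodule.span F {c1, c2, t} ∧
  (Pi.single 1 1 : Fin 4 → F) ∈ Submodule.span F {c1, c2, t}

/-- A user with cache rows `c1, c2` recovers file `B` from transmission `t` iff
`e₂` and `e₃` lie in the span of `{c1, c2, t}`. -/
def recoversB {F : Type*} [Field F] (c1 c2 t : Fin 4 → F) : Prop :=
  (Pi.single 2 1 : Fin 4 → F) ∈ Submodule.span F {c1, c2, t} ∧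
  (Pi.single 3 1 : Fin 4 → F) ∈ Submodule.span F {c1, c2, t}

open Submodule Module

/-- A span of three vectors cannot be all of `F⁴`. -/
private lemma aux_span3_ne_top {F : Type*} [Field F] (c1 c2 t : Fin 4 → F) :
    Submodule.span F ({c1, c2, t} : Set (Fin 4 → F)) ≠ ⊤ := by
  classical
  intro h
  have hlt : Submodule.span F ({c1, c2, t} : Set (Fin 4 → F)) < ⊤ := by
    apply span_lt_top_of_card_lt_finrank
    have h4 : finrank F (Fin 4 → F) = 4 := by simp
    rw [h4]
    calc ({c1, c2, t} : Set (Fin 4 → F)).toFinset.card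
        ≤ 3 := by
          rw [Set.toFinset_insert, Set.toFinset_insert, Set.toFinset_singleton]
          exact (Finset.card_insert_le _ _).trans (Nat.succ_le_succ
            ((Finset.card_insert_le _ _).trans (by simp)))
      _ < 4 := by norm_num
  exact hlt.ne h

/-- If a submodule of `F⁴` contains all four standard basis vectors, it is `⊤`. -/
private lemma aux_top_of_singles {F : Type*} [Field F] {S : Submodule F (Fin 4 → F)}
    (h : ∀ i, (Pi.single i 1 : Fin 4 → F) ∈ S) : S = ⊤ := by
  rw [eq_top_iff, ← (Pi.basisFun F (Fin 4)).span_eq, span_le]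
  rintro x ⟨i, rfl⟩
  simpa using h i

/-- If the cache recovers `B` from some transmission, the left block has det 0. -/
private lemma aux_detA_zero {F : Type*} [Field F] {c1 c2 t : Fin 4 → F}
    (hB : recoversB c1 c2 t) : c1 0 * c2 1 - c1 1 * c2 0 = 0 := by
  by_contra hd
  set S := Submodule.span F ({c1, c2, t} : Set (Fin 4 → F)) with hS
  have hc1 : c1 ∈ S := subset_span (by simp)
  have hc2 : c2 ∈ S := subset_span (by simp)
  obtain ⟨h2, h3⟩ := hB
  have h0 : (Pi.single 0 1 : Fin 4 → F) ∈ S := by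
    have heq : (Pi.single 0 1 : Fin 4 → F) =
        (c1 0 * c2 1 - c1 1 * c2 0)⁻¹ • (c2 1 • c1 - c1 1 • c2
          - (c2 1 * c1 2 - c1 1 * c2 2) • (Pi.single 2 1 : Fin 4 → F)
          - (c2 1 * c1 3 - c1 1 * c2 3) • (Pi.single 3 1 : Fin 4 → F)) := by
      funext i
      fin_cases i <;>
        simp +decide only [↓reduceIte, Pi.single_apply, Pi.smul_apply, Pi.sub_apply, smul_eq_mul,
          show (⟨2, by omega⟩ : Fin 4) = 2 from rfl, show (⟨3, by omega⟩ : Fin 4) = 3 from rfl,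
          show (⟨0, by omega⟩ : Fin 4) = 0 from rfl, show (⟨1, by omega⟩ : Fin 4) = 1 from rfl] <;>
        field_simp <;> ring
    rw [heq]
    exact S.smul_mem _ (S.sub_mem (S.sub_mem (S.sub_mem (S.smul_mem _ hc1) (S.smul_mem _ hc2))
      (S.smul_mem _ h2)) (S.smul_mem _ h3))
  have h1 : (Pi.single 1 1 : Fin 4 → F) ∈ S := by
    have heq : (Pi.single 1 1 : Fin 4 → F) =
        (c1 0 * c2 1 - c1 1 * c2 0)⁻¹ • (c1 0 • c2 - c2 0 • c1
          - (c1 0 * c2 2 - c2 0 * c1 2) • (Pi.single 2 1 : Fin 4 → F)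
          - (c1 0 * c2 3 - c2 0 * c1 3) • (Pi.single 3 1 : Fin 4 → F)) := by
      funext i
      fin_cases i <;>
        simp +decide only [↓reduceIte, Pi.single_apply, Pi.smul_apply, Pi.sub_apply, smul_eq_mul,
          show (⟨2, by omega⟩ : Fin 4) = 2 from rfl, show (⟨3, by omega⟩ : Fin 4) = 3 from rfl,
          show (⟨0, by omega⟩ : Fin 4) = 0 from rfl, show (⟨1, by omega⟩ : Fin 4) = 1 from rfl] <;>
        field_simp <;> ring
    rw [heq]
    exact S.smul_mem _ (S.sub_mem (S.sub_mem (S.sub_mem (S.smul_mem _ hc2) (S.smul_mem _ hc1))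
      (S.smul_mem _ h2)) (S.smul_mem _ h3))
  have htop : S = ⊤ := aux_top_of_singles (fun i => by
    fin_cases i
    · exact h0
    · exact h1
    · exact h2
    · exact h3)
  exact aux_span3_ne_top c1 c2 t htop

/-- If the cache recovers `A` from some transmission, the right block has det 0. -/
private lemma aux_detB_zero {F : Type*} [Field F] {c1 c2 t : Fin 4 → F}
    (hA : recoversA c1 c2 t) : c1 2 * c2 3 - c1 3 * c2 2 = 0 := by
  by_contra hd
  set S := Submodule.span F ({c1, c2, t} : Set (Fin 4 → F)) with hS
  have hc1 : c1 ∈ S := subset_span (by simp)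
  have hc2 : c2 ∈ S := subset_span (by simp)
  obtain ⟨h0, h1⟩ := hA
  have h2 : (Pi.single 2 1 : Fin 4 → F) ∈ S := by
    have heq : (Pi.single 2 1 : Fin 4 → F) =
        (c1 2 * c2 3 - c1 3 * c2 2)⁻¹ • (c2 3 • c1 - c1 3 • c2
          - (c2 3 * c1 0 - c1 3 * c2 0) • (Pi.single 0 1 : Fin 4 → F)
          - (c2 3 * c1 1 - c1 3 * c2 1) • (Pi.single 1 1 : Fin 4 → F)) := by
      funext i
      fin_cases i <;>
        simp +decide only [↓reduceIte, Pi.single_apply, Pi.smul_apply, Pi.sub_apply, smul_eq_mul,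
          show (⟨2, by omega⟩ : Fin 4) = 2 from rfl, show (⟨3, by omega⟩ : Fin 4) = 3 from rfl,
          show (⟨0, by omega⟩ : Fin 4) = 0 from rfl, show (⟨1, by omega⟩ : Fin 4) = 1 from rfl] <;>
        field_simp <;> ring
    rw [heq]
    exact S.smul_mem _ (S.sub_mem (S.sub_mem (S.sub_mem (S.smul_mem _ hc1) (S.smul_mem _ hc2))
      (S.smul_mem _ h0)) (S.smul_mem _ h1))
  have h3 : (Pi.single 3 1 : Fin 4 → F) ∈ S := by
    have heq : (Pi.single 3 1 : Fin 4 → F) =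
        (c1 2 * c2 3 - c1 3 * c2 2)⁻¹ • (c1 2 • c2 - c2 2 • c1
          - (c1 2 * c2 0 - c2 2 * c1 0) • (Pi.single 0 1 : Fin 4 → F)
          - (c1 2 * c2 1 - c2 2 * c1 1) • (Pi.single 1 1 : Fin 4 → F)) := by
      funext i
      fin_cases i <;>
        simp +decide only [↓reduceIte, Pi.single_apply, Pi.smul_apply, Pi.sub_apply, smul_eq_mul,
          show (⟨2, by omega⟩ : Fin 4) = 2 from rfl, show (⟨3, by omega⟩ : Fin 4) = 3 from rfl,
          show (⟨0, by omega⟩ : Fin 4) = 0 from rfl, show (⟨1, by omega⟩ : Fin 4) = 1 from rfl] <;>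
        field_simp <;> ring
    rw [heq]
    exact S.smul_mem _ (S.sub_mem (S.sub_mem (S.sub_mem (S.smul_mem _ hc2) (S.smul_mem _ hc1))
      (S.smul_mem _ h0)) (S.smul_mem _ h1))
  have htop : S = ⊤ := aux_top_of_singles (fun i => by
    fin_cases i
    · exact h0
    · exact h1
    · exact h2
    · exact h3)
  exact aux_span3_ne_top c1 c2 t htop

/-- If the cache recovers `A`, the left block is not the zero matrix. -/
private lemma aux_blockA_ne_zero {F : Type*} [Field F] {c1 c2 t : Fin 4 → F}
    (hA : recoversA c1 c2 t) (h10 : c1 0 = 0) (h11 : c1 1 = 0)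
    (h20 : c2 0 = 0) (h21 : c2 1 = 0) : False := by
  obtain ⟨he0, he1⟩ := hA
  rw [Submodule.mem_span_insert] at he0 he1
  obtain ⟨a1, z, hz, hz'⟩ := he0
  rw [Submodule.mem_span_insert] at hz
  obtain ⟨a2, w, hw, rfl⟩ := hz
  rw [Submodule.mem_span_singleton] at hw
  obtain ⟨a3, rfl⟩ := hw
  obtain ⟨b1, z2, hz2, hz2'⟩ := he1
  rw [Submodule.mem_span_insert] at hz2
  obtain ⟨b2, w2, hw2, rfl⟩ := hz2
  rw [Submodule.mem_span_singleton] at hw2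
  obtain ⟨b3, rfl⟩ := hw2
  have H00 := congrFun hz' 0
  have H01 := congrFun hz' 1
  have H10 := congrFun hz2' 0
  have H11 := congrFun hz2' 1
  simp +decide [Pi.single_apply, h10, h11, h20, h21] at H00 H01 H10 H11
  -- H00 : 1 = a3 * t 0, H01 : 0 = a3 * t 1, H10 : 0 = b3 * t 0, H11 : 1 = b3 * t 1
  have ha3 : a3 ≠ 0 := by
    intro h
    rw [h, zero_mul] at H00
    exact one_ne_zero H00
  have ht1 : t 1 = 0 := by
    rcases H01 with h | h
    · exact absurd h ha3
    · exact h
  rw [ht1, mul_zero] at H11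
  exact one_ne_zero H11

/-- If the cache recovers `B`, the right block is not the zero matrix. -/
private lemma aux_blockB_ne_zero {F : Type*} [Field F] {c1 c2 t : Fin 4 → F}
    (hB : recoversB c1 c2 t) (h12 : c1 2 = 0) (h13 : c1 3 = 0)
    (h22 : c2 2 = 0) (h23 : c2 3 = 0) : False := by
  obtain ⟨he0, he1⟩ := hB
  rw [Submodule.mem_span_insert] at he0 he1
  obtain ⟨a1, z, hz, hz'⟩ := he0
  rw [Submodule.mem_span_insert] at hz
  obtain ⟨a2, w, hw, rfl⟩ := hz
  rw [Submodule.mem_span_singleton] at hw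
  obtain ⟨a3, rfl⟩ := hw
  obtain ⟨b1, z2, hz2, hz2'⟩ := he1
  rw [Submodule.mem_span_insert] at hz2
  obtain ⟨b2, w2, hw2, rfl⟩ := hz2
  rw [Submodule.mem_span_singleton] at hw2
  obtain ⟨b3, rfl⟩ := hw2
  have H00 := congrFun hz' 2
  have H01 := congrFun hz' 3
  have H10 := congrFun hz2' 2
  have H11 := congrFun hz2' 3
  simp +decide [Pi.single_apply, h12, h13, h22, h23] at H00 H01 H10 H11
  have ha3 : a3 ≠ 0 := by
    intro h
    rw [h, zero_mul] at H00
    exact one_ne_zero H00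
  have ht1 : t 3 = 0 := by
    rcases H01 with h | h
    · exact absurd h ha3
    · exact h
  rw [ht1, mul_zero] at H11
  exact one_ne_zero H11

/-- A nonzero `2 × 2` matrix with vanishing determinant has rank one. -/
private lemma aux_rank22_eq_one {F : Type*} [Field F] {a b c d : F}
    (hdet : a * d - b * c = 0) (hne : ¬(a = 0 ∧ b = 0 ∧ c = 0 ∧ d = 0)) :
    (!![a, b; c, d] : Matrix (Fin 2) (Fin 2) F).rank = 1 := by
  set M : Matrix (Fin 2) (Fin 2) F := !![a, b; c, d] with hM
  have hdet' : M.det = 0 := by rw [hM, Matrix.det_fin_two_of]; exact hdet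
  obtain ⟨v, hv, hv0⟩ := (Matrix.exists_mulVec_eq_zero_iff).2 hdet'
  have hk : LinearMap.ker M.mulVecLin ≠ ⊥ := by
    intro hbot
    exact hv ((Submodule.mem_bot F).1
      (hbot ▸ (LinearMap.mem_ker.2 (by simpa using hv0))))
  have hsum : M.rank + finrank F ↥(LinearMap.ker M.mulVecLin) = 2 := by
    have := LinearMap.finrank_range_add_finrank_ker M.mulVecLin
    simpa [Matrix.rank] using this
  have hkpos : finrank F ↥(LinearMap.ker M.mulVecLin) ≠ 0 := by
    intro h
    exact hk (Submodule.finrank_eq_zero.1 h)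
  have hr0 : M.rank ≠ 0 := by
    intro h
    rw [Matrix.rank_eq_finrank_span_row, Submodule.finrank_eq_zero] at h
    have h0 : M 0 = 0 := by
      have hm : M 0 ∈ Submodule.span F (Set.range M.row) := subset_span ⟨0, rfl⟩
      rwa [h, Submodule.mem_bot] at hm
    have h1 : M 1 = 0 := by
      have hm : M 1 ∈ Submodule.span F (Set.range M.row) := subset_span ⟨1, rfl⟩
      rwa [h, Submodule.mem_bot] at hm
    have e1 := congrFun h0 0
    have e2 := congrFun h0 1
    have e3 := congrFun h1 0
    have e4 := congrFun h1 1
    simp [hM] at e1 e2 e3 e4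
    exact hne ⟨e1, e2, e3, e4⟩
  omega

/-- Rank constraints on the coefficient matrix of a cache: if the linearly
independent cache rows `c1, c2 ∈ F⁴` can recover file `A` from some transmission
and file `B` from some (possibly different) transmission, then the left 2×2 block
`C_A` (first two coordinates) and the right 2×2 block `C_B` (last two
coordinates) of the cache matrix both have rank 1. -/
theorem cache_blocks_rank_one (F : Type*) [Field F] (c1 c2 : Fin 4 → F)
    (hind : LinearIndependent F ![c1, c2])
    (hA : ∃ t : Fin 4 → F, recoversA c1 c2 t)
    (hB : ∃ t' : Fin 4 → F, recoversB c1 c2 t') :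
    (!![c1 0, c1 1; c2 0, c2 1] : Matrix (Fin 2) (Fin 2) F).rank = 1 ∧
    (!![c1 2, c1 3; c2 2, c2 3] : Matrix (Fin 2) (Fin 2) F).rank = 1 := by
  obtain ⟨t, hAt⟩ := hA
  obtain ⟨t', hBt'⟩ := hB
  constructor
  · apply aux_rank22_eq_one (aux_detA_zero hBt')
    rintro ⟨h1, h2, h3, h4⟩
    exact aux_blockA_ne_zero hAt h1 h2 h3 h4
  · apply aux_rank22_eq_one (aux_detB_zero hAt)
    rintro ⟨h1, h2, h3, h4⟩
    exact aux_blockB_ne_zero hBt' h1 h2 h3 h4
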